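/- Let Ω be a measure space, p ≥ 1 a real with p ≠ 2, and f, g ∈ L^p(Ω). Then f and g are disjointly supported (i.e., f(t)g(t) = 0 for almost every t) if and only if 2(‖f‖_p^p + ‖g‖_p^p) = ‖f - g‖_p^p + ‖f + g‖_p^p. -/

import Mathlib

open MeasureTheory

private lemma sq_rpow (x : ℝ) (hx : 0 ≤ x) (p : ℝ) : (x * x) ^ (p / 2) = x ^ p := by
  rw [show x * x = x ^ (2:ℕ) from (sq x).symm, ← Real.rpow_natCast x 2,
    ← Real.rpow_mul hx]
  congr 1
  push_cast
  ring

private lemma strict_subadd {q A B : ℝ} (hq0 : 0 < q) (hq1 : q < 1) (hA : 0 < A) (hB : 0 < B) :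
    (A + B) ^ q < A ^ q + B ^ q := by
  have hAB : 0 < A + B := by linarith
  have hqe : ∀ x : ℝ, 0 < x → x ^ q = x * x ^ (q - 1) := by
    intro x hx
    nth_rewrite 1 [show q = 1 + (q - 1) by ring]
    rw [Real.rpow_add hx, Real.rpow_one]
  have h1 : (A + B) ^ (q - 1) < A ^ (q - 1) :=
    Real.rpow_lt_rpow_of_neg hA (by linarith) (by linarith)
  have h2 : (A + B) ^ (q - 1) < B ^ (q - 1) :=
    Real.rpow_lt_rpow_of_neg hB (by linarith) (by linarith)
  rw [hqe _ hA, hqe _ hB, hqe _ hAB]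
  nlinarith [mul_lt_mul_of_pos_left h1 hA, mul_lt_mul_of_pos_left h2 hB]

private lemma strict_superadd {q A B : ℝ} (hq : 1 < q) (hA : 0 < A) (hB : 0 < B) :
    A ^ q + B ^ q < (A + B) ^ q := by
  have hAB : 0 < A + B := by linarith
  have hqe : ∀ x : ℝ, 0 < x → x ^ q = x * x ^ (q - 1) := by
    intro x hx
    nth_rewrite 1 [show q = 1 + (q - 1) by ring]
    rw [Real.rpow_add hx, Real.rpow_one]
  have h1 : A ^ (q - 1) < (A + B) ^ (q - 1) :=
    Real.rpow_lt_rpow hA.le (by linarith) (by linarith)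
  have h2 : B ^ (q - 1) < (A + B) ^ (q - 1) :=
    Real.rpow_lt_rpow hB.le (by linarith) (by linarith)
  rw [hqe _ hA, hqe _ hB, hqe _ hAB]
  nlinarith [mul_lt_mul_of_pos_left h1 hA, mul_lt_mul_of_pos_left h2 hB]

/-- Equality case when `a * b = 0`. -/
private lemma pt_eq {p : ℝ} (hp0 : p ≠ 0) (a b : ℂ) (hab : a * b = 0) :
    ‖a - b‖ ^ p + ‖a + b‖ ^ p
      = 2 * (‖a‖ ^ p + ‖b‖ ^ p) := by
  rcases mul_eq_zero.mp hab with h | h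
  · simp [h, zero_sub, zero_add, norm_neg, Real.zero_rpow hp0]
    ring
  · simp [h, sub_zero, add_zero, Real.zero_rpow hp0]
    ring

/-- midpoint identity from the parallelogram law, abbrevs -/
private lemma chain (p : ℝ) (hp1 : 1 ≤ p) (a b : ℂ)
    (ha : a ≠ 0) (hb : b ≠ 0) :
    (p < 2 → ‖a - b‖ ^ p + ‖a + b‖ ^ p
      < 2 * (‖a‖ ^ p + ‖b‖ ^ p)) ∧
    (2 < p → 2 * (‖a‖ ^ p + ‖b‖ ^ p)
      < ‖a - b‖ ^ p + ‖a + b‖ ^ p) := by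
  set q := p / 2 with hq
  have hq0 : 0 < q := by simp only [hq]; linarith
  set A := ‖a‖ * ‖a‖ with hAdef
  set B := ‖b‖ * ‖b‖ with hBdef
  set u := ‖a + b‖ * ‖a + b‖ with hudef
  set v := ‖a - b‖ * ‖a - b‖ with hvdef
  have hpar : u + v = 2 * (A + B) := by
    rw [hudef, hvdef, hAdef, hBdef]
    have := parallelogram_law_with_norm ℝ a b
    simp only [sq] at this
    linarith
  have hA0 : 0 < A := mul_pos (norm_pos_iff.mpr ha) (norm_pos_iff.mpr ha)
  have hB0 : 0 < B := mul_pos (norm_pos_iff.mpr hb) (norm_pos_iff.mpr hb)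
  have hu0 : 0 ≤ u := mul_nonneg (norm_nonneg _) (norm_nonneg _)
  have hv0 : 0 ≤ v := mul_nonneg (norm_nonneg _) (norm_nonneg _)
  have hmid : (1/2 : ℝ) * u + (1/2 : ℝ) * v = A + B := by linarith
  have eA : A ^ q = ‖a‖ ^ p := by
    rw [hAdef, sq_rpow _ (norm_nonneg a)]
  have eB : B ^ q = ‖b‖ ^ p := by
    rw [hBdef, sq_rpow _ (norm_nonneg b)]
  have eu : u ^ q = ‖a + b‖ ^ p := by
    rw [hudef, sq_rpow _ (norm_nonneg _)]
  have ev : v ^ q = ‖a - b‖ ^ p := by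
    rw [hvdef, sq_rpow _ (norm_nonneg _)]
  constructor
  · intro hlt
    have hq1 : q < 1 := by simp only [hq]; linarith
    have hconc := (Real.concaveOn_rpow hq0.le hq1.le).2
      (Set.mem_Ici.mpr hu0) (Set.mem_Ici.mpr hv0)
      (by norm_num : (0:ℝ) ≤ 1/2) (by norm_num : (0:ℝ) ≤ 1/2) (by norm_num)
    simp only [smul_eq_mul, hmid] at hconc
    have hsub : (A + B) ^ q < A ^ q + B ^ q := strict_subadd hq0 hq1 hA0 hB0
    rw [← eA, ← eB, ← eu, ← ev]
    linarith
  · intro hgt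
    have hq1 : 1 < q := by simp only [hq]; linarith
    have hconv := (convexOn_rpow hq1.le).2
      (Set.mem_Ici.mpr hu0) (Set.mem_Ici.mpr hv0)
      (by norm_num : (0:ℝ) ≤ 1/2) (by norm_num : (0:ℝ) ≤ 1/2) (by norm_num)
    simp only [smul_eq_mul, hmid] at hconv
    have hsup : A ^ q + B ^ q < (A + B) ^ q := strict_superadd hq1 hA0 hB0
    rw [← eA, ← eB, ← eu, ← ev]
    linarith

theorem stmt4 {X : Type*} [MeasurableSpace X] (μ : Measure X) (p : ℝ)
    (hp : 1 ≤ p) (hp2 : p ≠ 2) (f g : X → ℂ)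
    (hf : MemLp f (ENNReal.ofReal p) μ) (hg : MemLp g (ENNReal.ofReal p) μ) :
    (∀ᵐ t ∂μ, f t * g t = 0) ↔
      2 * ((∫ t, ‖f t‖ ^ p ∂μ) + ∫ t, ‖g t‖ ^ p ∂μ) =
        (∫ t, ‖f t - g t‖ ^ p ∂μ) + ∫ t, ‖f t + g t‖ ^ p ∂μ := by
  have hp0 : 0 < p := lt_of_lt_of_le zero_lt_one hp
  have hpne : ENNReal.ofReal p ≠ 0 := (ENNReal.ofReal_pos.mpr hp0).ne'
  have hptop : ENNReal.ofReal p ≠ ⊤ := ENNReal.ofReal_ne_top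
  have htr : (ENNReal.ofReal p).toReal = p := ENNReal.toReal_ofReal hp0.le
  have i1 : Integrable (fun t => ‖f t‖ ^ p) μ := by
    simpa [htr] using hf.integrable_norm_rpow hpne hptop
  have i2 : Integrable (fun t => ‖g t‖ ^ p) μ := by
    simpa [htr] using hg.integrable_norm_rpow hpne hptop
  have i3 : Integrable (fun t => ‖f t - g t‖ ^ p) μ := by
    simpa [htr] using (hf.sub hg).integrable_norm_rpow hpne hptop
  have i4 : Integrable (fun t => ‖f t + g t‖ ^ p) μ := by
    simpa [htr] using (hf.add hg).integrable_norm_rpow hpne hptop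
  -- sign and pointwise facts
  obtain ⟨s, hs0, hsnn, hseq⟩ :
      ∃ s : ℝ, s ≠ 0 ∧
        (∀ a b : ℂ, 0 ≤ s * (2 * (‖a‖ ^ p + ‖b‖ ^ p)
            - (‖a - b‖ ^ p + ‖a + b‖ ^ p))) ∧
        (∀ a b : ℂ, s * (2 * (‖a‖ ^ p + ‖b‖ ^ p)
            - (‖a - b‖ ^ p + ‖a + b‖ ^ p)) = 0 ↔ a * b = 0) := by
    have key : ∀ a b : ℂ, a * b ≠ 0 →
        (p < 2 → ‖a - b‖ ^ p + ‖a + b‖ ^ p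
          < 2 * (‖a‖ ^ p + ‖b‖ ^ p)) ∧
        (2 < p → 2 * (‖a‖ ^ p + ‖b‖ ^ p)
          < ‖a - b‖ ^ p + ‖a + b‖ ^ p) := by
      intro a b hab
      obtain ⟨ha, hb⟩ := mul_ne_zero_iff.mp hab
      exact chain p hp a b ha hb
    rcases lt_or_gt_of_ne hp2 with hlt | hgt
    · refine ⟨1, one_ne_zero, fun a b => ?_, fun a b => ?_⟩
      · rcases eq_or_ne (a * b) 0 with h | h
        · rw [pt_eq hp0.ne' a b h]; simp
        · have := (key a b h).1 hlt; nlinarith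
      · rw [one_mul, sub_eq_zero]
        constructor
        · intro h
          by_contra hab
          have := (key a b hab).1 hlt
          linarith
        · intro h; exact (pt_eq hp0.ne' a b h).symm
    · refine ⟨-1, by norm_num, fun a b => ?_, fun a b => ?_⟩
      · rcases eq_or_ne (a * b) 0 with h | h
        · rw [pt_eq hp0.ne' a b h]; simp
        · have := (key a b h).2 hgt; nlinarith
      · rw [neg_one_mul, neg_eq_zero, sub_eq_zero]
        constructor
        · intro h
          by_contra hab
          have := (key a b hab).2 hgt
          linarith
        · intro h; exact (pt_eq hp0.ne' a b h).symm
  set D : X → ℝ := fun t => s * (2 * (‖f t‖ ^ p + ‖g t‖ ^ p)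
      - (‖f t - g t‖ ^ p + ‖f t + g t‖ ^ p)) with hD
  have hDint : Integrable D μ := (((i1.add i2).const_mul 2).sub (i3.add i4)).const_mul s
  have hDval : ∫ t, D t ∂μ = s * (2 * ((∫ t, ‖f t‖ ^ p ∂μ)
      + ∫ t, ‖g t‖ ^ p ∂μ) - ((∫ t, ‖f t - g t‖ ^ p ∂μ)
      + ∫ t, ‖f t + g t‖ ^ p ∂μ)) := by
    have j12 : Integrable (fun t => 2 * (‖f t‖ ^ p + ‖g t‖ ^ p)) μ :=
      (i1.add i2).const_mul 2
    have j34 : Integrable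
        (fun t => ‖f t - g t‖ ^ p + ‖f t + g t‖ ^ p) μ := i3.add i4
    rw [hD]
    rw [integral_const_mul, integral_sub j12 j34, integral_const_mul,
      integral_add i1 i2, integral_add i3 i4]
  constructor
  · intro h
    have hD0 : D =ᵐ[μ] 0 := h.mono fun t ht => (hseq _ _).mpr ht
    have hz : ∫ t, D t ∂μ = 0 := by rw [integral_congr_ae hD0]; simp
    rw [hDval] at hz
    rcases mul_eq_zero.mp hz with h' | h'
    · exact absurd h' hs0
    · linarith
  · intro h
    have hz : ∫ t, D t ∂μ = 0 := by rw [hDval, h, sub_self, mul_zero]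
    have hae : D =ᵐ[μ] 0 :=
      (integral_eq_zero_iff_of_nonneg_ae
        (Filter.Eventually.of_forall fun t => hsnn _ _) hDint).mp hz
    exact hae.mono fun t ht => (hseq _ _).mp ht
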